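/- Let g' be any predicate on phrases such that g'(x) holds for every phrase x that occurs at least f times in PFP(T). Let S_3 = { PFP(P)[max(i−1,1)..min(j+1,N)] : PFP(P)[i..j] is a maximal substring of PFP(P) consisting only of phrases satisfying g' } and S_4 = { PFP(P)[i..i+1] : neither PFP(P)[i] nor PFP(P)[i+1] satisfies g' }. Then every phrase sequence in S_1 is contained in some phrase sequence in S_3, and every phrase sequence in S_2 is contained in some phrase sequence in S_3 ∪ S_4. (When g' holds exactly for the phrases occurring at least f times in PFP(T) and f = 1, every phrase sequence in S_2 is contained in some phrase sequence in S_4.) -/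

import Mathlib

/-- The substring of `S` at 0-indexed closed positions `[i..j]`. -/
def strSub {α : Type*} (S : List α) (i j : ℕ) : List α := (S.drop i).take (j + 1 - i)

/-- `S` occurs as a contiguous substring of `X` at 0-indexed position `p`. -/
def occursAt {α : Type*} (S X : List α) (p : ℕ) : Prop :=
  p + S.length ≤ X.length ∧ (X.drop p).take S.length = S

/-- The number of occurrences of `S` as a contiguous substring of `X`. -/
def occCount {α : Type*} [DecidableEq α] (S X : List α) : ℕ :=
  ((Finset.range (X.length + 1)).filter
    (fun p => p + S.length ≤ X.length ∧ (X.drop p).take S.length = S)).card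

/-- `P[i..j]` (0-indexed, closed) is an `f`-MEM of `P` with respect to `T`. -/
def IsMEM {α : Type*} [DecidableEq α] (f : ℕ) (P T : List α) (i j : ℕ) : Prop :=
  i ≤ j ∧ j < P.length ∧ f ≤ occCount (strSub P i j) T ∧
  (i = 0 ∨ occCount (strSub P (i - 1) j) T < f) ∧
  (j + 1 = P.length ∨ occCount (strSub P i (j + 1)) T < f)

/-- The trigger positions of `S` under window width `w` and trigger predicate `h`:
positions `q` with `w ≤ q ≤ |S|` such that `h` holds of the `w` characters ending at
(1-indexed) position `q`. -/
def pfpTriggers {α : Type*} (w : ℕ) (h : List α → Bool) (S : List α) : List ℕ :=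
  (List.range (S.length + 1)).filter (fun q => decide (w ≤ q) && h ((S.drop (q - w)).take w))

/-- 0-indexed starting positions of the phrases of the prefix-free parse of `S`. -/
def pfpStarts {α : Type*} (w : ℕ) (h : List α → Bool) (S : List α) : List ℕ :=
  0 :: (pfpTriggers w h S).map (fun q => q - w)

/-- Exclusive ending positions of the phrases of the prefix-free parse of `S`. -/
def pfpEnds {α : Type*} (w : ℕ) (h : List α → Bool) (S : List α) : List ℕ :=
  pfpTriggers w h S ++ [S.length]

/-- The prefix-free parse of `S`, as the list of its phrases. -/
def PFP {α : Type*} (w : ℕ) (h : List α → Bool) (S : List α) : List (List α) :=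
  ((pfpStarts w h S).zip (pfpEnds w h S)).map (fun se => (S.drop se.1).take (se.2 - se.1))

/-- The starting position in `S` of phrase `i` (0-indexed) of `PFP(S)`. -/
def pfpStart {α : Type*} (w : ℕ) (h : List α → Bool) (S : List α) (i : ℕ) : ℕ :=
  (pfpStarts w h S).getD i 0

/-- The exclusive ending position in `S` of phrase `j` (0-indexed) of `PFP(S)`. -/
def pfpEnd {α : Type*} (w : ℕ) (h : List α → Bool) (S : List α) (j : ℕ) : ℕ :=
  (pfpEnds w h S).getD j 0

/-- The substring of `S` that becomes the phrase sequence `PFP(S)[i..j]` (0-indexed):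
from the first character of phrase `i` to the last character of phrase `j`. -/
def pfpBecomes {α : Type*} (w : ℕ) (h : List α → Bool) (S : List α) (i j : ℕ) : List α :=
  (S.drop (pfpStart w h S i)).take (pfpEnd w h S j - pfpStart w h S i)

/-- The pair `(l, r)` of 0-indexed phrase positions delimits a phrase sequence in `S₁`:
`PFP(P)[l..r]` is obtained from an `f`-MEM `PFP(P)[i..j]` of `PFP(P)` with respect to
`PFP(T)` by extending one phrase in each direction where possible. -/
def inS1 {α : Type*} [DecidableEq α] (w f : ℕ) (h : List α → Bool) (P T : List α)
    (l r : ℕ) : Prop :=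
  ∃ i j, IsMEM f (PFP w h P) (PFP w h T) i j ∧
    l = i - 1 ∧ r = min (j + 1) ((PFP w h P).length - 1)

/-- The pair `(l, r)` of 0-indexed phrase positions delimits a phrase sequence in `S₂`:
`r = l + 1` and neither phrase `PFP(P)[l]` nor phrase `PFP(P)[l+1]` occurs in `PFP(T)`. -/
def inS2 {α : Type*} [DecidableEq α] (w : ℕ) (h : List α → Bool) (P T : List α)
    (l r : ℕ) : Prop :=
  r = l + 1 ∧ l + 1 < (PFP w h P).length ∧
  (PFP w h P).getD l [] ∉ PFP w h T ∧ (PFP w h P).getD (l + 1) [] ∉ PFP w h T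


/-- The pair `(l, r)` of 0-indexed phrase positions delimits a phrase sequence in `S₃`:
`PFP(P)[l..r]` is obtained from a maximal run `PFP(P)[i..j]` of phrases satisfying `g'`
by extending one phrase in each direction where possible. -/
def inS3 {α : Type*} (w : ℕ) (h : List α → Bool) (P : List α) (g' : List α → Prop)
    (l r : ℕ) : Prop :=
  ∃ i j, i ≤ j ∧ j < (PFP w h P).length ∧
    (∀ c, i ≤ c → c ≤ j → g' ((PFP w h P).getD c [])) ∧
    (i = 0 ∨ ¬ g' ((PFP w h P).getD (i - 1) [])) ∧
    (j + 1 = (PFP w h P).length ∨ ¬ g' ((PFP w h P).getD (j + 1) [])) ∧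
    l = i - 1 ∧ r = min (j + 1) ((PFP w h P).length - 1)

/-- The pair `(l, r)` of 0-indexed phrase positions delimits a phrase sequence in `S₄`:
`r = l + 1` and neither phrase `PFP(P)[l]` nor phrase `PFP(P)[l+1]` satisfies `g'`. -/
def inS4 {α : Type*} (w : ℕ) (h : List α → Bool) (P : List α) (g' : List α → Prop)
    (l r : ℕ) : Prop :=
  r = l + 1 ∧ l + 1 < (PFP w h P).length ∧
  ¬ g' ((PFP w h P).getD l []) ∧ ¬ g' ((PFP w h P).getD (l + 1) [])

lemma occCount_le_single {β : Type*} [DecidableEq β] (S X : List β) (d : β) (k : ℕ)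
    (hk : k < S.length) : occCount S X ≤ occCount [S.getD k d] X := by
  unfold occCount
  apply Finset.card_le_card_of_injOn (fun p => p + k)
  · intro p hp
    simp only [Finset.mem_coe, Finset.mem_filter, Finset.mem_range, List.length_singleton] at hp ⊢
    obtain ⟨hp1, hp2, hp3⟩ := hp
    have hkX : p + k < X.length := lt_of_lt_of_le (by omega) hp2
    refine ⟨by omega, by omega, ?_⟩
    rw [← List.drop_drop]
    have hkd : k < (X.drop p).length := by rw [List.length_drop]; omega
    rw [List.take_one_drop_eq_of_lt_length hkd]
    congr 1
    rw [List.getD_eq_getElem S d hk]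
    have h4 := List.getElem_take (xs := X.drop p) (j := S.length) (i := k)
      (h := by rw [hp3]; exact hk)
    simp only [hp3] at h4
    simp only [List.get_eq_getElem]
    exact h4.symm
  · intro a _ b _ hab; simpa using hab

lemma mem_of_occCount_single_pos {β : Type*} [DecidableEq β] (x : β) (X : List β)
    (hx : 1 ≤ occCount [x] X) : x ∈ X := by
  unfold occCount at hx
  obtain ⟨p, hp⟩ := Finset.card_pos.mp hx
  simp only [Finset.mem_filter, Finset.mem_range] at hp
  obtain ⟨-, h1, h2⟩ := hp
  simp only [List.length_singleton] at h2
  have : x ∈ (X.drop p).take 1 := by rw [h2]; simp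
  exact List.mem_of_mem_drop (List.mem_of_mem_take this)

lemma strSub_getD {β : Type*} (P : List β) (d : β) (i j c : ℕ) (hic : i ≤ c) (hcj : c ≤ j)
    (hj : j < P.length) : (strSub P i j).getD (c - i) d = P.getD c d := by
  have h1 : c - i < (strSub P i j).length := by
    unfold strSub; simp [List.length_take, List.length_drop]; omega
  have h2 : c < P.length := by omega
  rw [List.getD_eq_getElem _ d h1, List.getD_eq_getElem _ d h2]
  unfold strSub
  show (List.take (j + 1 - i) (List.drop i P))[c - i]'(by simpa [strSub] using h1) = P[c]
  rw [List.getElem_take, List.getElem_drop]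
  congr 1; omega

lemma maximal_run (Q : ℕ → Prop) (N i j : ℕ) (hij : i ≤ j) (hj : j < N)
    (hQ : ∀ c, i ≤ c → c ≤ j → Q c) :
    ∃ i' j', i' ≤ i ∧ j ≤ j' ∧ j' < N ∧ (∀ c, i' ≤ c → c ≤ j' → Q c) ∧
      (i' = 0 ∨ ¬ Q (i' - 1)) ∧ (j' + 1 = N ∨ ¬ Q (j' + 1)) := by
  classical
  set PR : ℕ → Prop := fun t => j + t < N ∧ ∀ c, i ≤ c → c ≤ j + t → Q c with hPR
  have h0 : PR 0 := ⟨by omega, fun c h1 h2 => hQ c h1 (by omega)⟩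
  set t := Nat.findGreatest PR N with ht
  have hspec : PR t := Nat.findGreatest_spec (Nat.zero_le N) h0
  set j' := j + t with hj'
  have hjN : j' < N := hspec.1
  have hrun : ∀ c, i ≤ c → c ≤ j' → Q c := hspec.2
  have hright : j' + 1 = N ∨ ¬ Q (j' + 1) := by
    by_cases hcase : j' + 1 = N
    · exact Or.inl hcase
    · right
      have hnt : ¬ PR (t + 1) := Nat.findGreatest_is_greatest (n := N) (by omega) (by omega)
      intro hQj
      apply hnt
      refine ⟨by omega, fun c h1 h2 => ?_⟩
      rcases Nat.lt_or_ge c (j + t + 1) with hc | hc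
      · exact hrun c h1 (by omega)
      · have : c = j' + 1 := by omega
        rwa [this]
  set PL : ℕ → Prop := fun s => s ≤ i ∧ ∀ c, s ≤ c → c ≤ j' → Q c with hPL
  have hLex : ∃ s, PL s := ⟨i, le_refl i, fun c h1 h2 => hrun c h1 h2⟩
  set i' := Nat.find hLex with hi'
  have hLspec : PL i' := Nat.find_spec hLex
  have hleft : i' = 0 ∨ ¬ Q (i' - 1) := by
    by_cases hcase : i' = 0
    · exact Or.inl hcase
    · right
      have hnm : ¬ PL (i' - 1) := Nat.find_min hLex (by omega)
      intro hQi
      apply hnm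
      refine ⟨by omega, fun c h1 h2 => ?_⟩
      rcases Nat.lt_or_ge c i' with hc | hc
      · have : c = i' - 1 := by omega
        rwa [← this] at hQi
      · exact hLspec.2 c hc h2
  exact ⟨i', j', hLspec.1, by omega, hjN, hLspec.2, hleft, hright⟩


/-- Let `g'` be any predicate on phrases holding for every phrase
occurring at least `f` times in `PFP(T)`, and form `S₃` and `S₄` as above. Then every
phrase sequence in `S₁` is contained in some phrase sequence in `S₃`, and every phrase
sequence in `S₂` is contained in some phrase sequence in `S₃ ∪ S₄`; moreover, when `g'`
holds exactly for the phrases occurring at least `f` times in `PFP(T)` and `f = 1`,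
every phrase sequence in `S₂` is contained in some phrase sequence in `S₄`. -/
theorem kebab_parse_combination {α : Type*} [DecidableEq α] (w f : ℕ) (hw : 1 ≤ w)
    (hf : 1 ≤ f) (h : List α → Bool) (P T : List α)
    (hN : 2 ≤ (PFP w h P).length)
    (g' : List α → Prop)
    (hg' : ∀ x : List α, f ≤ occCount [x] (PFP w h T) → g' x) :
    (∀ l r, inS1 w f h P T l r →
        ∃ l' r', inS3 w h P g' l' r' ∧ l' ≤ l ∧ r ≤ r') ∧
    (∀ l r, inS2 w h P T l r →
        ∃ l' r', (inS3 w h P g' l' r' ∨ inS4 w h P g' l' r') ∧ l' ≤ l ∧ r ≤ r') ∧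
    ((∀ x : List α, g' x ↔ f ≤ occCount [x] (PFP w h T)) → f = 1 →
      ∀ l r, inS2 w h P T l r →
        ∃ l' r', inS4 w h P g' l' r' ∧ l' ≤ l ∧ r ≤ r') := by
  classical
  set Pp := PFP w h P with hPp
  set Tp := PFP w h T with hTp
  set N := Pp.length with hNdef
  have hall : ∀ i j, i ≤ j → j < N → f ≤ occCount (strSub Pp i j) Tp →
      ∀ c, i ≤ c → c ≤ j → g' (Pp.getD c []) := by
    intro i j hij hjN hocc c h1 h2
    apply hg'
    have hk : c - i < (strSub Pp i j).length := by
      unfold strSub; simp only [List.length_take, List.length_drop]; omega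
    calc f ≤ occCount (strSub Pp i j) Tp := hocc
      _ ≤ occCount [(strSub Pp i j).getD (c - i) []] Tp :=
        occCount_le_single _ _ _ _ hk
      _ = occCount [Pp.getD c []] Tp := by
        rw [strSub_getD Pp [] i j c h1 h2 hjN]
  have hNL : (PFP w h P).length = N := rfl
  refine ⟨?_, ?_, ?_⟩
  · rintro l r ⟨i, j, ⟨hij, hjN, hocc, -, -⟩, hl, hr⟩
    obtain ⟨i', j', hi'i, hjj', hj'N, hrun, hleft, hright⟩ :=
      maximal_run (fun c => g' (Pp.getD c [])) N i j hij hjN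
        (fun c h1 h2 => hall i j hij hjN hocc c h1 h2)
    exact ⟨i' - 1, min (j' + 1) (N - 1),
      ⟨i', j', by omega, hj'N, hrun, hleft, hright, rfl, rfl⟩,
      by omega, by subst hr; omega⟩
  · rintro l r ⟨hr, hlN, hl1, hl2⟩
    by_cases hgl : g' (Pp.getD l [])
    · obtain ⟨i', j', hi'i, hjj', hj'N, hrun, hleft, hright⟩ :=
        maximal_run (fun c => g' (Pp.getD c [])) N l l le_rfl (by omega)
          (fun c h1 h2 => by
            have hc : c = l := by omega
            show g' (Pp.getD c [])
            rw [hc]; exact hgl)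
      exact ⟨i' - 1, min (j' + 1) (N - 1),
        Or.inl ⟨i', j', by omega, hj'N, hrun, hleft, hright, rfl, rfl⟩,
        by omega, by omega⟩
    · by_cases hgl2 : g' (Pp.getD (l + 1) [])
      · obtain ⟨i', j', hi'i, hjj', hj'N, hrun, hleft, hright⟩ :=
          maximal_run (fun c => g' (Pp.getD c [])) N (l + 1) (l + 1) le_rfl (by omega)
            (fun c h1 h2 => by
              have hc : c = l + 1 := by omega
              show g' (Pp.getD c [])
              rw [hc]; exact hgl2)
        exact ⟨i' - 1, min (j' + 1) (N - 1),
          Or.inl ⟨i', j', by omega, hj'N, hrun, hleft, hright, rfl, rfl⟩,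
          by omega, by omega⟩
      · exact ⟨l, l + 1, Or.inr ⟨rfl, hlN, hgl, hgl2⟩, le_rfl, by omega⟩
  · rintro heq hf1 l r ⟨hr, hlN, hl1, hl2⟩
    subst hf1
    refine ⟨l, l + 1, ⟨rfl, hlN, ?_, ?_⟩, le_rfl, by omega⟩
    · intro hg; exact hl1 (mem_of_occCount_single_pos _ _ ((heq _).mp hg))
    · intro hg; exact hl2 (mem_of_occCount_single_pos _ _ ((heq _).mp hg))
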